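/- arXiv:2011.09711 — 2 statements merged into one kernel-verified Lean document; each statement's English description precedes it below -/
import Mathlib

section
/- Set c = (1−F²)/(|ξ|³|ξ|_F) and D = (F²ξ₃⁴−|ξ_h|⁴)/|ξ|_F². Then: (i) for every X∈ℝ, det(X·I₃ − M(ξ)) = (X − cξ₃²)·(X² − cD·X − c²ξ₃²|ξ_h|²); in particular the eigenvalues of M(ξ) are cξ₃² and (c/2)(D ± √(D²+4ξ₃²|ξ_h|²)); (ii) the vector (−ξ₂, ξ₁, 0) satisfies M(ξ)·(−ξ₂, ξ₁, 0)ᵀ = cξ₃²·(−ξ₂, ξ₁, 0)ᵀ. -/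
open Matrix


noncomputable def Mmat (F ξ1 ξ2 ξ3 : ℝ) : Matrix (Fin 3) (Fin 3) ℝ :=
  ((1 - F ^ 2) /
      ((Real.sqrt (ξ1 ^ 2 + ξ2 ^ 2 + ξ3 ^ 2)) ^ 3 *
        Real.sqrt (ξ1 ^ 2 + ξ2 ^ 2 + F ^ 2 * ξ3 ^ 2))) •
    !![ξ3 ^ 2 * (1 - ξ1 ^ 2 * (3 / (ξ1 ^ 2 + ξ2 ^ 2 + ξ3 ^ 2) +
        1 / (ξ1 ^ 2 + ξ2 ^ 2 + F ^ 2 * ξ3 ^ 2))),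
      -(ξ1 * ξ2 * ξ3 ^ 2) * (3 / (ξ1 ^ 2 + ξ2 ^ 2 + ξ3 ^ 2) +
        1 / (ξ1 ^ 2 + ξ2 ^ 2 + F ^ 2 * ξ3 ^ 2)),
      ξ1 * ξ3 * (2 - ξ3 ^ 2 * (3 / (ξ1 ^ 2 + ξ2 ^ 2 + ξ3 ^ 2) +
        F ^ 2 / (ξ1 ^ 2 + ξ2 ^ 2 + F ^ 2 * ξ3 ^ 2)));
      -(ξ1 * ξ2 * ξ3 ^ 2) * (3 / (ξ1 ^ 2 + ξ2 ^ 2 + ξ3 ^ 2) +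
        1 / (ξ1 ^ 2 + ξ2 ^ 2 + F ^ 2 * ξ3 ^ 2)),
      ξ3 ^ 2 * (1 - ξ2 ^ 2 * (3 / (ξ1 ^ 2 + ξ2 ^ 2 + ξ3 ^ 2) +
        1 / (ξ1 ^ 2 + ξ2 ^ 2 + F ^ 2 * ξ3 ^ 2))),
      ξ2 * ξ3 * (2 - ξ3 ^ 2 * (3 / (ξ1 ^ 2 + ξ2 ^ 2 + ξ3 ^ 2) +
        F ^ 2 / (ξ1 ^ 2 + ξ2 ^ 2 + F ^ 2 * ξ3 ^ 2)));
      ξ1 * ξ3 * (2 - ξ3 ^ 2 * (3 / (ξ1 ^ 2 + ξ2 ^ 2 + ξ3 ^ 2) +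
        F ^ 2 / (ξ1 ^ 2 + ξ2 ^ 2 + F ^ 2 * ξ3 ^ 2))),
      ξ2 * ξ3 * (2 - ξ3 ^ 2 * (3 / (ξ1 ^ 2 + ξ2 ^ 2 + ξ3 ^ 2) +
        F ^ 2 / (ξ1 ^ 2 + ξ2 ^ 2 + F ^ 2 * ξ3 ^ 2))),
      -(ξ1 ^ 2 + ξ2 ^ 2) * (1 - ξ3 ^ 2 * (3 / (ξ1 ^ 2 + ξ2 ^ 2 + ξ3 ^ 2) +
        F ^ 2 / (ξ1 ^ 2 + ξ2 ^ 2 + F ^ 2 * ξ3 ^ 2)))]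

noncomputable def cCoef (F ξ1 ξ2 ξ3 : ℝ) : ℝ :=
  (1 - F ^ 2) /
    ((Real.sqrt (ξ1 ^ 2 + ξ2 ^ 2 + ξ3 ^ 2)) ^ 3 *
      Real.sqrt (ξ1 ^ 2 + ξ2 ^ 2 + F ^ 2 * ξ3 ^ 2))

noncomputable def Dcoef (F ξ1 ξ2 ξ3 : ℝ) : ℝ :=
  (F ^ 2 * ξ3 ^ 4 - (ξ1 ^ 2 + ξ2 ^ 2) ^ 2) / (ξ1 ^ 2 + ξ2 ^ 2 + F ^ 2 * ξ3 ^ 2)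


private lemma det3 (X c a b d e f g h i j : ℝ) :
    (X • (1 : Matrix (Fin 3) (Fin 3) ℝ) - c • !![a,b,d;e,f,g;h,i,j]).det =
      (X - c*a) * ((X - c*f) * (X - c*j) - (c*g) * (c*i))
      - (c*b) * ((c*e) * (X - c*j) + (c*g) * (c*h))
      - (c*d) * ((c*e) * (c*i) + (X - c*f) * (c*h)) := by
  have hm : (X • (1 : Matrix (Fin 3) (Fin 3) ℝ) - c • !![a,b,d;e,f,g;h,i,j]) =
      !![X - c*a, -(c*b), -(c*d); -(c*e), X - c*f, -(c*g); -(c*h), -(c*i), X - c*j] := by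
    ext k l
    fin_cases k <;> fin_cases l <;>
      simp [Matrix.one_apply, sub_eq_add_neg]
  rw [hm, Matrix.det_fin_three]
  simp [Matrix.cons_val_zero, Matrix.cons_val_one]
  ring

set_option maxHeartbeats 1000000 in
private lemma detpoly (F c ξ1 ξ2 ξ3 X u v : ℝ) (hu : u = ξ1^2+ξ2^2+ξ3^2)
    (hv : v = ξ1^2+ξ2^2+F^2*ξ3^2) :
    (X - c*(ξ3^2*(u*v - ξ1^2*(3*v+u)))) *
        ((X - c*(ξ3^2*(u*v - ξ2^2*(3*v+u)))) *
            (X - c*(-(ξ1^2+ξ2^2)*(u*v - ξ3^2*(3*v+F^2*u)))) -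
          (c*(ξ2*ξ3*(2*(u*v) - ξ3^2*(3*v+F^2*u)))) *
            (c*(ξ2*ξ3*(2*(u*v) - ξ3^2*(3*v+F^2*u))))) -
      (c*(-(ξ1*ξ2*ξ3^2*(3*v+u)))) *
        ((c*(-(ξ1*ξ2*ξ3^2*(3*v+u)))) *
            (X - c*(-(ξ1^2+ξ2^2)*(u*v - ξ3^2*(3*v+F^2*u)))) +
          (c*(ξ2*ξ3*(2*(u*v) - ξ3^2*(3*v+F^2*u)))) *
            (c*(ξ1*ξ3*(2*(u*v) - ξ3^2*(3*v+F^2*u))))) -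
      (c*(ξ1*ξ3*(2*(u*v) - ξ3^2*(3*v+F^2*u)))) *
        ((c*(-(ξ1*ξ2*ξ3^2*(3*v+u)))) *
            (c*(ξ2*ξ3*(2*(u*v) - ξ3^2*(3*v+F^2*u)))) +
          (X - c*(ξ3^2*(u*v - ξ2^2*(3*v+u)))) *
            (c*(ξ1*ξ3*(2*(u*v) - ξ3^2*(3*v+F^2*u))))) =
    (X - c*(u*v)*ξ3^2) *
      (X^2 - c*u*(F^2*ξ3^4 - (ξ1^2+ξ2^2)^2)*X - (c*(u*v))^2*ξ3^2*(ξ1^2+ξ2^2)) := by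
  subst hu
  subst hv
  ring

set_option maxHeartbeats 4000000 in
private lemma detkey (F c ξ1 ξ2 ξ3 X : ℝ) (h1 : ξ1^2+ξ2^2+ξ3^2 ≠ 0)
    (h2 : ξ1^2+ξ2^2+F^2*ξ3^2 ≠ 0) :
    (X • (1 : Matrix (Fin 3) (Fin 3) ℝ) - c •
    !![ξ3 ^ 2 * (1 - ξ1 ^ 2 * (3 / (ξ1 ^ 2 + ξ2 ^ 2 + ξ3 ^ 2) +
        1 / (ξ1 ^ 2 + ξ2 ^ 2 + F ^ 2 * ξ3 ^ 2))),
      -(ξ1 * ξ2 * ξ3 ^ 2) * (3 / (ξ1 ^ 2 + ξ2 ^ 2 + ξ3 ^ 2) +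
        1 / (ξ1 ^ 2 + ξ2 ^ 2 + F ^ 2 * ξ3 ^ 2)),
      ξ1 * ξ3 * (2 - ξ3 ^ 2 * (3 / (ξ1 ^ 2 + ξ2 ^ 2 + ξ3 ^ 2) +
        F ^ 2 / (ξ1 ^ 2 + ξ2 ^ 2 + F ^ 2 * ξ3 ^ 2)));
      -(ξ1 * ξ2 * ξ3 ^ 2) * (3 / (ξ1 ^ 2 + ξ2 ^ 2 + ξ3 ^ 2) +
        1 / (ξ1 ^ 2 + ξ2 ^ 2 + F ^ 2 * ξ3 ^ 2)),
      ξ3 ^ 2 * (1 - ξ2 ^ 2 * (3 / (ξ1 ^ 2 + ξ2 ^ 2 + ξ3 ^ 2) +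
        1 / (ξ1 ^ 2 + ξ2 ^ 2 + F ^ 2 * ξ3 ^ 2))),
      ξ2 * ξ3 * (2 - ξ3 ^ 2 * (3 / (ξ1 ^ 2 + ξ2 ^ 2 + ξ3 ^ 2) +
        F ^ 2 / (ξ1 ^ 2 + ξ2 ^ 2 + F ^ 2 * ξ3 ^ 2)));
      ξ1 * ξ3 * (2 - ξ3 ^ 2 * (3 / (ξ1 ^ 2 + ξ2 ^ 2 + ξ3 ^ 2) +
        F ^ 2 / (ξ1 ^ 2 + ξ2 ^ 2 + F ^ 2 * ξ3 ^ 2))),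
      ξ2 * ξ3 * (2 - ξ3 ^ 2 * (3 / (ξ1 ^ 2 + ξ2 ^ 2 + ξ3 ^ 2) +
        F ^ 2 / (ξ1 ^ 2 + ξ2 ^ 2 + F ^ 2 * ξ3 ^ 2))),
      -(ξ1 ^ 2 + ξ2 ^ 2) * (1 - ξ3 ^ 2 * (3 / (ξ1 ^ 2 + ξ2 ^ 2 + ξ3 ^ 2) +
        F ^ 2 / (ξ1 ^ 2 + ξ2 ^ 2 + F ^ 2 * ξ3 ^ 2)))]).det =
    (X - c * ξ3 ^ 2) *
      (X ^ 2 - c * ((F ^ 2 * ξ3 ^ 4 - (ξ1 ^ 2 + ξ2 ^ 2) ^ 2) /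
          (ξ1 ^ 2 + ξ2 ^ 2 + F ^ 2 * ξ3 ^ 2)) * X -
        c ^ 2 * ξ3 ^ 2 * (ξ1 ^ 2 + ξ2 ^ 2)) := by
  set u := ξ1 ^ 2 + ξ2 ^ 2 + ξ3 ^ 2 with hu
  set v := ξ1 ^ 2 + ξ2 ^ 2 + F ^ 2 * ξ3 ^ 2 with hv
  rw [det3]
  have H00 : c * (ξ3 ^ 2 * (1 - ξ1 ^ 2 * (3 / u + 1 / v))) =
      c / (u * v) * (ξ3 ^ 2 * (u * v - ξ1 ^ 2 * (3 * v + u))) := by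
    field_simp
    try ring
  have H01 : c * (-(ξ1 * ξ2 * ξ3 ^ 2) * (3 / u + 1 / v)) =
      c / (u * v) * (-(ξ1 * ξ2 * ξ3 ^ 2 * (3 * v + u))) := by
    field_simp
    try ring
  have H02 : c * (ξ1 * ξ3 * (2 - ξ3 ^ 2 * (3 / u + F ^ 2 / v))) =
      c / (u * v) * (ξ1 * ξ3 * (2 * (u * v) - ξ3 ^ 2 * (3 * v + F ^ 2 * u))) := by
    field_simp
    try ring
  have H11 : c * (ξ3 ^ 2 * (1 - ξ2 ^ 2 * (3 / u + 1 / v))) =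
      c / (u * v) * (ξ3 ^ 2 * (u * v - ξ2 ^ 2 * (3 * v + u))) := by
    field_simp
    try ring
  have H12 : c * (ξ2 * ξ3 * (2 - ξ3 ^ 2 * (3 / u + F ^ 2 / v))) =
      c / (u * v) * (ξ2 * ξ3 * (2 * (u * v) - ξ3 ^ 2 * (3 * v + F ^ 2 * u))) := by
    field_simp
    try ring
  have H22 : c * (-(ξ1 ^ 2 + ξ2 ^ 2) * (1 - ξ3 ^ 2 * (3 / u + F ^ 2 / v))) =
      c / (u * v) * (-(ξ1 ^ 2 + ξ2 ^ 2) * (u * v - ξ3 ^ 2 * (3 * v + F ^ 2 * u))) := by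
    field_simp
    try ring
  rw [H00, H01, H02, H11, H12, H22,
    detpoly F (c / (u * v)) ξ1 ξ2 ξ3 X u v hu hv]
  have huv : u * v ≠ 0 := mul_ne_zero h1 h2
  field_simp
  try ring

/-- (i) the characteristic polynomial of `M(ξ)` factors as
`(X−cξ₃²)(X²−cDX−c²ξ₃²|ξ_h|²)`; in particular the eigenvalues of `M(ξ)` are
`cξ₃²` and `(c/2)(D ± √(D²+4ξ₃²|ξ_h|²))`; (ii) `(−ξ₂,ξ₁,0)` is an eigenvector
for the eigenvalue `cξ₃²`. -/
theorem Mmat_charpoly_and_eigenvector (F ξ1 ξ2 ξ3 : ℝ) (hF : 0 < F)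
    (hξ : ¬(ξ1 = 0 ∧ ξ2 = 0 ∧ ξ3 = 0)) :
    (∀ X : ℝ,
      (X • (1 : Matrix (Fin 3) (Fin 3) ℝ) - Mmat F ξ1 ξ2 ξ3).det =
        (X - cCoef F ξ1 ξ2 ξ3 * ξ3 ^ 2) *
          (X ^ 2 - cCoef F ξ1 ξ2 ξ3 * Dcoef F ξ1 ξ2 ξ3 * X -
            (cCoef F ξ1 ξ2 ξ3) ^ 2 * ξ3 ^ 2 * (ξ1 ^ 2 + ξ2 ^ 2))) ∧
    (∀ X : ℝ,
      (X = cCoef F ξ1 ξ2 ξ3 * ξ3 ^ 2 ∨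
        X = cCoef F ξ1 ξ2 ξ3 / 2 *
          (Dcoef F ξ1 ξ2 ξ3 +
            Real.sqrt ((Dcoef F ξ1 ξ2 ξ3) ^ 2 + 4 * ξ3 ^ 2 * (ξ1 ^ 2 + ξ2 ^ 2))) ∨
        X = cCoef F ξ1 ξ2 ξ3 / 2 *
          (Dcoef F ξ1 ξ2 ξ3 -
            Real.sqrt ((Dcoef F ξ1 ξ2 ξ3) ^ 2 + 4 * ξ3 ^ 2 * (ξ1 ^ 2 + ξ2 ^ 2)))) →
      (X • (1 : Matrix (Fin 3) (Fin 3) ℝ) - Mmat F ξ1 ξ2 ξ3).det = 0) ∧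
    (Mmat F ξ1 ξ2 ξ3).mulVec ![-ξ2, ξ1, 0] =
      (cCoef F ξ1 ξ2 ξ3 * ξ3 ^ 2) • ![-ξ2, ξ1, 0] := by
  have h1 : ξ1^2+ξ2^2+ξ3^2 ≠ 0 := by
    intro h
    have e1 : ξ1 ^ 2 = 0 := by nlinarith [sq_nonneg ξ1, sq_nonneg ξ2, sq_nonneg ξ3]
    have e2 : ξ2 ^ 2 = 0 := by nlinarith [sq_nonneg ξ1, sq_nonneg ξ2, sq_nonneg ξ3]
    have e3 : ξ3 ^ 2 = 0 := by nlinarith [sq_nonneg ξ1, sq_nonneg ξ2, sq_nonneg ξ3]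
    exact hξ ⟨by nlinarith, by nlinarith, by nlinarith⟩
  have h2 : ξ1^2+ξ2^2+F^2*ξ3^2 ≠ 0 := by
    intro h
    have hF2 : 0 < F ^ 2 := by positivity
    have e1 : ξ1 ^ 2 = 0 := by nlinarith [sq_nonneg ξ1, sq_nonneg ξ2, sq_nonneg ξ3]
    have e2 : ξ2 ^ 2 = 0 := by nlinarith [sq_nonneg ξ1, sq_nonneg ξ2, sq_nonneg ξ3]
    have e3 : ξ3 ^ 2 = 0 := by nlinarith [sq_nonneg ξ1, sq_nonneg ξ2, sq_nonneg ξ3]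
    exact hξ ⟨by nlinarith, by nlinarith, by nlinarith⟩
  have key : ∀ X : ℝ,
      (X • (1 : Matrix (Fin 3) (Fin 3) ℝ) - Mmat F ξ1 ξ2 ξ3).det =
        (X - cCoef F ξ1 ξ2 ξ3 * ξ3 ^ 2) *
          (X ^ 2 - cCoef F ξ1 ξ2 ξ3 * Dcoef F ξ1 ξ2 ξ3 * X -
            (cCoef F ξ1 ξ2 ξ3) ^ 2 * ξ3 ^ 2 * (ξ1 ^ 2 + ξ2 ^ 2)) := by
    intro X
    rw [Mmat, Dcoef]
    exact detkey F (cCoef F ξ1 ξ2 ξ3) ξ1 ξ2 ξ3 X h1 h2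
  refine ⟨key, ?_, ?_⟩
  · intro X hX
    rw [key X]
    set c := cCoef F ξ1 ξ2 ξ3
    set D := Dcoef F ξ1 ξ2 ξ3
    have hE : (0:ℝ) ≤ D ^ 2 + 4 * ξ3 ^ 2 * (ξ1 ^ 2 + ξ2 ^ 2) := by positivity
    have hs : Real.sqrt (D ^ 2 + 4 * ξ3 ^ 2 * (ξ1 ^ 2 + ξ2 ^ 2)) ^ 2 =
        D ^ 2 + 4 * ξ3 ^ 2 * (ξ1 ^ 2 + ξ2 ^ 2) := Real.sq_sqrt hE
    rcases hX with rfl | rfl | rfl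
    · ring
    · have : (c / 2 * (D + Real.sqrt (D ^ 2 + 4 * ξ3 ^ 2 * (ξ1 ^ 2 + ξ2 ^ 2)))) ^ 2 -
          c * D * (c / 2 * (D + Real.sqrt (D ^ 2 + 4 * ξ3 ^ 2 * (ξ1 ^ 2 + ξ2 ^ 2)))) -
          c ^ 2 * ξ3 ^ 2 * (ξ1 ^ 2 + ξ2 ^ 2) = 0 := by
        linear_combination (c ^ 2 / 4) * hs
      rw [this, mul_zero]
    · have : (c / 2 * (D - Real.sqrt (D ^ 2 + 4 * ξ3 ^ 2 * (ξ1 ^ 2 + ξ2 ^ 2)))) ^ 2 -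
          c * D * (c / 2 * (D - Real.sqrt (D ^ 2 + 4 * ξ3 ^ 2 * (ξ1 ^ 2 + ξ2 ^ 2)))) -
          c ^ 2 * ξ3 ^ 2 * (ξ1 ^ 2 + ξ2 ^ 2) = 0 := by
        linear_combination (c ^ 2 / 4) * hs
      rw [this, mul_zero]
  · funext i
    fin_cases i <;>
      simp [Mmat, cCoef, Matrix.mulVec, dotProduct, Fin.sum_univ_three,
        Matrix.smul_apply] <;> ring
end

section
/- Assume in addition F≠1. Then the rank of the matrix M(ξ) is determined as follows: rank M(ξ) = 1 if ξ₃ = 0 and (ξ₁,ξ₂) ≠ (0,0); rank M(ξ) = 2 if (ξ₁,ξ₂) = (0,0) and ξ₃ ≠ 0; and rank M(ξ) = 3 if ξ₃ ≠ 0 and (ξ₁,ξ₂) ≠ (0,0). Equivalently, among the three eigenvalues of M(ξ), exactly one is nonzero in the first case, exactly two in the second case, and all three in the third case. -/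
open Matrix

lemma det_Mmat (F ξ1 ξ2 ξ3 : ℝ)
    (hS : ξ1 ^ 2 + ξ2 ^ 2 + ξ3 ^ 2 ≠ 0) (hP : ξ1 ^ 2 + ξ2 ^ 2 + F ^ 2 * ξ3 ^ 2 ≠ 0) :
    (Mmat F ξ1 ξ2 ξ3).det =
      (cCoef F ξ1 ξ2 ξ3) ^ 3 * (-(ξ1 ^ 2 + ξ2 ^ 2) * ξ3 ^ 4) := by
  rw [Mmat, det_smul, det_fin_three]
  simp only [Matrix.cons_val', Matrix.cons_val_zero, Matrix.cons_val_one, Matrix.head_cons,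
    Matrix.empty_val', Matrix.cons_val_fin_one, Matrix.head_fin_const, Fintype.card_fin,
    Matrix.of_apply, Matrix.cons_val_two, Matrix.tail_cons]
  rw [show ((1 - F ^ 2) /
      ((Real.sqrt (ξ1 ^ 2 + ξ2 ^ 2 + ξ3 ^ 2)) ^ 3 *
        Real.sqrt (ξ1 ^ 2 + ξ2 ^ 2 + F ^ 2 * ξ3 ^ 2))) = cCoef F ξ1 ξ2 ξ3 from rfl]
  congr 1
  have hP' : ξ3 ^ 2 * F ^ 2 + ξ1 ^ 2 + ξ2 ^ 2 ≠ 0 := by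
    intro h; apply hP; linear_combination h
  field_simp
  ring_nf
  field_simp
  ring

lemma cCoef_ne_zero (F ξ1 ξ2 ξ3 : ℝ) (hF : 0 < F) (hF1 : F ≠ 1)
    (hS : 0 < ξ1 ^ 2 + ξ2 ^ 2 + ξ3 ^ 2) (hP : 0 < ξ1 ^ 2 + ξ2 ^ 2 + F ^ 2 * ξ3 ^ 2) :
    cCoef F ξ1 ξ2 ξ3 ≠ 0 := by
  have h1 : (1 : ℝ) - F ^ 2 ≠ 0 := by
    intro h
    have : F ^ 2 = 1 := by linarith
    have : F = 1 := by nlinarith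
    exact hF1 this
  have hs : Real.sqrt (ξ1 ^ 2 + ξ2 ^ 2 + ξ3 ^ 2) > 0 := Real.sqrt_pos.mpr hS
  have hp : Real.sqrt (ξ1 ^ 2 + ξ2 ^ 2 + F ^ 2 * ξ3 ^ 2) > 0 := Real.sqrt_pos.mpr hP
  exact div_ne_zero h1 (by positivity)

/-- Rank of the Hessian matrix `M(ξ)` when `F ≠ 1`: rank 1 on the horizontal
plane (off the axis), rank 2 on the vertical axis, rank 3 elsewhere. -/
theorem Mmat_rank (F ξ1 ξ2 ξ3 : ℝ) (hF : 0 < F) (hF1 : F ≠ 1)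
    (hξ : ¬(ξ1 = 0 ∧ ξ2 = 0 ∧ ξ3 = 0)) :
    ((ξ3 = 0 ∧ ¬(ξ1 = 0 ∧ ξ2 = 0)) → (Mmat F ξ1 ξ2 ξ3).rank = 1) ∧
    ((ξ1 = 0 ∧ ξ2 = 0 ∧ ξ3 ≠ 0) → (Mmat F ξ1 ξ2 ξ3).rank = 2) ∧
    ((ξ3 ≠ 0 ∧ ¬(ξ1 = 0 ∧ ξ2 = 0)) → (Mmat F ξ1 ξ2 ξ3).rank = 3) := by
  have hSpos : 0 < ξ1 ^ 2 + ξ2 ^ 2 + ξ3 ^ 2 := by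
    rcases not_and_or.mp hξ with h | h
    · positivity
    rcases not_and_or.mp h with h | h <;> positivity
  have hPpos : 0 < ξ1 ^ 2 + ξ2 ^ 2 + F ^ 2 * ξ3 ^ 2 := by
    rcases not_and_or.mp hξ with h | h
    · positivity
    rcases not_and_or.mp h with h | h <;> positivity
  have hc : cCoef F ξ1 ξ2 ξ3 ≠ 0 := cCoef_ne_zero F ξ1 ξ2 ξ3 hF hF1 hSpos hPpos
  refine ⟨?_, ?_, ?_⟩
  · rintro ⟨h3, hh⟩
    subst h3
    have hh2 : ξ1 ^ 2 + ξ2 ^ 2 ≠ 0 := by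
      intro h
      exact hh ⟨by nlinarith [sq_nonneg ξ1, sq_nonneg ξ2], by nlinarith [sq_nonneg ξ1, sq_nonneg ξ2]⟩
    have hd : -(cCoef F ξ1 ξ2 0 * (ξ1 ^ 2 + ξ2 ^ 2)) ≠ 0 := by
      simp only [ne_eq, neg_eq_zero, mul_eq_zero, not_or]
      exact ⟨hc, hh2⟩
    have hM : Mmat F ξ1 ξ2 0 =
        Matrix.diagonal ![0, 0, -(cCoef F ξ1 ξ2 0 * (ξ1 ^ 2 + ξ2 ^ 2))] := by
      ext i j
      fin_cases i <;> fin_cases j <;>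
        simp [Mmat, cCoef, Matrix.diagonal, Matrix.vecHead, Matrix.vecTail] <;> ring_nf
    rw [hM, Matrix.rank_diagonal, Fintype.card_subtype]
    rw [show (Finset.univ : Finset (Fin 3)) = {0, 1, 2} from rfl]
    simp [Finset.filter_insert, Finset.filter_singleton, hd]
  · rintro ⟨h1, h2, h3⟩
    subst h1; subst h2
    have hd : cCoef F 0 0 ξ3 * ξ3 ^ 2 ≠ 0 := by
      have hc' : cCoef F 0 0 ξ3 ≠ 0 := by
        simpa using hc
      exact mul_ne_zero hc' (pow_ne_zero 2 h3)
    have hM : Mmat F 0 0 ξ3 =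
        Matrix.diagonal ![cCoef F 0 0 ξ3 * ξ3 ^ 2, cCoef F 0 0 ξ3 * ξ3 ^ 2, 0] := by
      ext i j
      fin_cases i <;> fin_cases j <;>
        simp [Mmat, cCoef, Matrix.diagonal, Matrix.vecHead, Matrix.vecTail] <;> ring_nf
    rw [hM, Matrix.rank_diagonal, Fintype.card_subtype]
    rw [show (Finset.univ : Finset (Fin 3)) = {0, 1, 2} from rfl]
    simp [Finset.filter_insert, Finset.filter_singleton, hd]
  · rintro ⟨h3, hh⟩
    have hh2 : ξ1 ^ 2 + ξ2 ^ 2 ≠ 0 := by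
      intro h
      exact hh ⟨by nlinarith [sq_nonneg ξ1, sq_nonneg ξ2], by nlinarith [sq_nonneg ξ1, sq_nonneg ξ2]⟩
    have hdet : (Mmat F ξ1 ξ2 ξ3).det ≠ 0 := by
      rw [det_Mmat F ξ1 ξ2 ξ3 hSpos.ne' hPpos.ne']
      exact mul_ne_zero (pow_ne_zero 3 hc)
        (mul_ne_zero (neg_ne_zero.mpr hh2) (pow_ne_zero 4 h3))
    have : IsUnit (Mmat F ξ1 ξ2 ξ3) :=
      (Matrix.isUnit_iff_isUnit_det _).mpr (isUnit_iff_ne_zero.mpr hdet)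
    rw [Matrix.rank_of_isUnit _ this, Fintype.card_fin]
end
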